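/- Let n be a positive integer and let y_1 = n, y_2, …, y_r be the second coordinates of the strange-root process starting at ⟨1, n⟩ and terminating at ⟨r, r⟩. Define w_i = y_i − y_{i+1} + 1 for 1 ≤ i ≤ r−1. Then w_i = ⌈(n − 1 − (w_1 + ⋯ + w_{i−1})) / (i+1)⌉ for all i = 1, …, r−1. -/

import Mathlib

/-- The next value in the strange-root process: the least integer `z` with
`(i+1)*z > i*(y+1)`. -/
def srStep (i y : ℕ) : ℕ := i * (y + 1) / (i + 1) + 1

/-- `srY n i` is the second coordinate `y_i` of the `i`-th pair of the
strange-root process started at `⟨1, n⟩` (indices start at 1). -/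
def srY (n : ℕ) : ℕ → ℕ
  | 0 => n
  | 1 => n
  | (i+2) => srStep (i+1) (srY n (i+1))

/-- The strange root of `n`: the first index `r ≥ 1` with `y_r ≤ r`. -/
noncomputable def sr (n : ℕ) : ℕ := sInf {r | 1 ≤ r ∧ srY n r ≤ r}

lemma srY_succ (n i : ℕ) (hi : 1 ≤ i) : srY n (i + 1) = srStep i (srY n i) := by
  obtain ⟨k, rfl⟩ : ∃ k, i = k + 1 := ⟨i - 1, by omega⟩
  rfl

lemma key_ceil (i a : ℕ) :
    (a : ℤ) - (srStep i a : ℤ) + 1 = ⌈(((a : ℚ) - i) / (i + 1))⌉ := by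
  have hpos : (0:ℚ) < (i:ℚ) + 1 := by positivity
  set q := i * (a + 1) / (i + 1) with hq
  have hmod := Nat.div_add_mod (i * (a + 1)) (i + 1)
  have hlt : (i * (a + 1)) % (i + 1) < i + 1 := Nat.mod_lt _ (by omega)
  set m := (i * (a + 1)) % (i + 1) with hm
  have hmodQ : ((i:ℚ) + 1) * q + m = i * (a + 1) := by exact_mod_cast hmod
  have hltQ : (m:ℚ) < i + 1 := by exact_mod_cast hlt
  have hsr : (srStep i a : ℤ) = (q:ℤ) + 1 := by simp [srStep, hq]
  rw [hsr]
  symm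
  rw [Int.ceil_eq_iff]
  constructor
  · rw [lt_div_iff₀ hpos]
    push_cast
    nlinarith [hmodQ, hltQ]
  · rw [div_le_iff₀ hpos]
    push_cast
    nlinarith [hmodQ, (show (0:ℚ) ≤ m by positivity)]

lemma sum_w (n : ℕ) : ∀ i, 1 ≤ i →
    ∑ j ∈ Finset.Ico 1 i, ((srY n j : ℚ) - srY n (j + 1) + 1)
      = (n : ℚ) - srY n i + (i - 1) := by
  intro i hi
  induction i, hi using Nat.le_induction with
  | base => simp [srY]
  | succ k hk ih =>
      rw [Finset.sum_Ico_succ_top hk, ih]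
      have h1 : srY n 1 = n := rfl
      push_cast
      ring

/-- With `w_i = y_i - y_(i+1) + 1`, one has
`w_i = ⌈(n - 1 - (w_1 + ⋯ + w_(i-1))) / (i+1)⌉` for `1 ≤ i ≤ sr n - 1`. -/
theorem strange_root_w_formula (n : ℕ) (hn : 1 ≤ n) :
    ∀ i, 1 ≤ i → i ≤ sr n - 1 →
      ((srY n i : ℤ) - srY n (i + 1) + 1) =
        ⌈(((n : ℚ) - 1 -
            ∑ j ∈ Finset.Ico 1 i, ((srY n j : ℚ) - srY n (j + 1) + 1)) /
          (i + 1))⌉ := by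
  intro i hi _
  rw [sum_w n i hi, srY_succ n i hi]
  have harg : (n : ℚ) - 1 - ((n : ℚ) - srY n i + (i - 1)) = (srY n i : ℚ) - i := by
    ring
  rw [harg]
  exact key_ceil i (srY n i)
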